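/- Let θ, ψ : ℝ → ℝ be continuously differentiable, let J ⊂ ℝ be an open interval and let M > δ > 0 be constants such that θ'(s) > M and ψ'(r) + δ < M for all r, s ∈ J. Let x > 1 satisfy φ←(x) > κ(2M/δ - 1)(x - 1), and let ū ∈ ℝ and ξ̄ > 0 be such that ū - φ←(σ)ξ̄ + κσξ̄ ∈ J and ū - φ←(σ)ξ̄ - κσξ̄ ∈ J for every σ ∈ [1, x]. Then ∫₁ˣ [ θ'(ū - φ←(σ)ξ̄ + κσξ̄)(φ←'(σ) - κ) - ψ'(ū - φ←(σ)ξ̄ - κσξ̄)(φ←'(σ) + κ) ] dσ > 0. (Equivalently, the change of φ(r,s) = θ(s) - ψ(r) across the incoming backward shock of ξ-ratio x with left state (ξ̄, ū) is strictly negative; this is the key inequality in Case 1 of the proof that the isentropic p-system with γ > 1 admits no nontrivial Glimm-type TVD field.) -/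

import Mathlib

open Real Set Filter Topology

/-- κ = √γ / α with α = (γ-1)/2. -/
noncomputable def kappa (γ : ℝ) : ℝ := Real.sqrt γ / ((γ - 1) / 2)

/-- The shock branch x ↦ √((1 - x^{-1/α})(x^{γ/α} - 1)), α = (γ-1)/2. -/
noncomputable def shockPart (γ : ℝ) (x : ℝ) : ℝ :=
  Real.sqrt ((1 - x ^ (-(1 : ℝ) / ((γ - 1) / 2))) * (x ^ (γ / ((γ - 1) / 2)) - 1))

/-- Backward auxiliary function φ← : rarefaction branch κ(x-1) for x ≤ 1,
    shock branch for x ≥ 1 (they agree, with value 0, at x = 1). -/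
noncomputable def phiB (γ : ℝ) (x : ℝ) : ℝ :=
  if x ≤ 1 then kappa γ * (x - 1) else shockPart γ x

/-- Forward auxiliary function φ→ : shock branch -√(...) for x ≤ 1,
    rarefaction branch κ(x-1) for x ≥ 1 (they agree, with value 0, at x = 1). -/
noncomputable def phiF (γ : ℝ) (x : ℝ) : ℝ :=
  if x < 1 then -shockPart γ x else kappa γ * (x - 1)

namespace Case1Aux

noncomputable def pp (γ : ℝ) : ℝ := -(1 : ℝ) / ((γ - 1) / 2)
noncomputable def qq (γ : ℝ) : ℝ := γ / ((γ - 1) / 2)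
noncomputable def aa (γ : ℝ) : ℝ := (1 : ℝ) / ((γ - 1) / 2)

noncomputable def ff (γ σ : ℝ) : ℝ := (1 - σ ^ pp γ) * (σ ^ qq γ - 1)

noncomputable def DD (γ σ : ℝ) : ℝ :=
  (aa γ * σ ^ (pp γ - 1) * (σ ^ qq γ - 1) + qq γ * σ ^ (qq γ - 1) * (1 - σ ^ pp γ))
    / (2 * Real.sqrt (ff γ σ))

variable {γ σ : ℝ}

lemma halpha (hγ : 1 < γ) : 0 < (γ - 1) / 2 := by linarith

lemma hpp_neg (hγ : 1 < γ) : pp γ < 0 := by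
  have := halpha hγ; unfold pp
  rw [div_neg_iff]; right; constructor <;> linarith

lemma haa_pos (hγ : 1 < γ) : 0 < aa γ := by
  have := halpha hγ; unfold aa; positivity

lemma hqq_pos (hγ : 1 < γ) : 0 < qq γ := by
  have := halpha hγ; unfold qq; positivity

lemma hpa : pp γ = -aa γ := by unfold pp aa; ring

lemma hpq_sum (hγ : 1 < γ) : pp γ + qq γ = 2 := by
  have := halpha hγ; unfold pp qq
  have hne : γ - 1 ≠ 0 := by linarith
  field_simp
  ring

lemma haq : qq γ = aa γ * γ := by unfold aa qq; ring

lemma hqq_ge_one (hγ : 1 < γ) : 1 ≤ qq γ := by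
  unfold qq
  rw [le_div_iff₀ (halpha hγ)]; linarith

lemma hkappa_pos (hγ : 1 < γ) : 0 < kappa γ := by
  have h := halpha hγ; unfold kappa
  have : 0 < Real.sqrt γ := Real.sqrt_pos.2 (by linarith)
  positivity

lemma hkappa_sq (hγ : 1 < γ) : kappa γ ^ 2 = aa γ * qq γ := by
  have h := halpha hγ
  unfold kappa aa qq
  rw [div_pow, Real.sq_sqrt (by linarith : (0:ℝ) ≤ γ)]
  field_simp

section sigma
variable (hγ : 1 < γ) (hσ : 1 < σ)
include hγ hσ

lemma hσpos : (0:ℝ) < σ := lt_trans one_pos hσ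

lemma hp_lt_one : σ ^ pp γ < 1 :=
  Real.rpow_lt_one_of_one_lt_of_neg hσ (hpp_neg hγ)

lemma hp_pos : 0 < σ ^ pp γ := Real.rpow_pos_of_pos (hσpos hγ hσ) _

lemma hq_gt_one : 1 < σ ^ qq γ := by
  have := Real.rpow_lt_rpow_of_exponent_lt hσ (hqq_pos hγ)
  · rwa [Real.rpow_zero] at this

lemma hff_pos : 0 < ff γ σ := by
  have h1 := hp_lt_one hγ hσ
  have h2 := hq_gt_one hγ hσ
  unfold ff; nlinarith

lemma hasDerivAt_ff :
    HasDerivAt (ff γ)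
      (aa γ * σ ^ (pp γ - 1) * (σ ^ qq γ - 1) + qq γ * σ ^ (qq γ - 1) * (1 - σ ^ pp γ)) σ := by
  have hne : σ ≠ 0 := ne_of_gt (hσpos hγ hσ)
  have h1 : HasDerivAt (fun y : ℝ => 1 - y ^ pp γ) (0 - pp γ * σ ^ (pp γ - 1)) σ :=
    (hasDerivAt_const σ (1:ℝ)).sub (Real.hasDerivAt_rpow_const (Or.inl hne))
  have h2 : HasDerivAt (fun y : ℝ => y ^ qq γ - 1) (qq γ * σ ^ (qq γ - 1)) σ :=
    (Real.hasDerivAt_rpow_const (Or.inl hne)).sub_const 1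
  have := h1.mul h2
  convert this using 1 <;> try rfl
  rw [hpa]; ring

lemma hasDerivAt_phiB : HasDerivAt (phiB γ) (DD γ σ) σ := by
  have hfd := hasDerivAt_ff hγ hσ
  have hne : ff γ σ ≠ 0 := ne_of_gt (hff_pos hγ hσ)
  have hs : HasDerivAt (fun y => Real.sqrt (ff γ y))
      ((aa γ * σ ^ (pp γ - 1) * (σ ^ qq γ - 1) + qq γ * σ ^ (qq γ - 1) * (1 - σ ^ pp γ))
        / (2 * Real.sqrt (ff γ σ))) σ := hfd.sqrt hne
  have heq : phiB γ =ᶠ[nhds σ] fun y => Real.sqrt (ff γ y) := by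
    filter_upwards [Ioi_mem_nhds hσ] with y hy
    have : ¬ (y ≤ 1) := not_le.2 hy
    simp only [phiB, this, if_false, shockPart, ff, pp, qq]
  exact (hs.congr_of_eventuallyEq heq : HasDerivAt (phiB γ) _ σ)





lemma hσ0 : (0:ℝ) < σ := lt_trans one_pos hσ

lemma r1 : σ ^ pp γ * σ ^ aa γ = 1 := by
  rw [← Real.rpow_add (hσ0 hγ hσ), hpa, neg_add_cancel, Real.rpow_zero]

lemma r2 : σ ^ (pp γ - 1) * σ ^ (qq γ - 1) = 1 := by
  rw [← Real.rpow_add (hσ0 hγ hσ)]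
  have h : pp γ - 1 + (qq γ - 1) = 0 := by have := hpq_sum (γ := γ) hγ; linarith
  rw [h, Real.rpow_zero]

lemma r3 : σ ^ qq γ * σ ^ (pp γ - 1) = σ := by
  rw [← Real.rpow_add (hσ0 hγ hσ)]
  have h : qq γ + (pp γ - 1) = 1 := by have := hpq_sum (γ := γ) hγ; linarith
  rw [h, Real.rpow_one]

lemma r3' : σ ^ (qq γ - 1) * σ ^ pp γ = σ := by
  rw [← Real.rpow_add (hσ0 hγ hσ)]
  have h : qq γ - 1 + pp γ = 1 := by have := hpq_sum (γ := γ) hγ; linarith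
  rw [h, Real.rpow_one]

lemma L1 : γ * (σ ^ aa γ - 1) ≤ σ ^ qq γ - 1 := by
  have hs : (0:ℝ) ≤ σ ^ aa γ - 1 := by
    have : (1:ℝ) ≤ σ ^ aa γ := Real.one_le_rpow hσ.le (haa_pos hγ).le
    linarith
  have hb := one_add_mul_self_le_rpow_one_add (s := σ ^ aa γ - 1) (by linarith) hγ.le
  have h4 : (1 + (σ ^ aa γ - 1)) ^ γ = σ ^ qq γ := by
    rw [add_sub_cancel, ← Real.rpow_mul (hσ0 hγ hσ).le, ← haq]
  rw [h4] at hb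
  linarith

lemma L2 : σ ^ qq γ - 1 ≤ γ * σ ^ qq γ * (1 - σ ^ pp γ) := by
  have hppos : (0:ℝ) < σ ^ pp γ := Real.rpow_pos_of_pos (hσ0 hγ hσ) _
  have hb := one_add_mul_self_le_rpow_one_add (s := σ ^ pp γ - 1) (by linarith) hγ.le
  have h4 : (1 + (σ ^ pp γ - 1)) ^ γ = (σ ^ qq γ)⁻¹ := by
    rw [add_sub_cancel, ← Real.rpow_mul (hσ0 hγ hσ).le]
    have : pp γ * γ = -(qq γ) := by rw [hpa, haq]; ring
    rw [this, Real.rpow_neg (hσ0 hγ hσ).le]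
  rw [h4] at hb
  have hqpos : (0:ℝ) < σ ^ qq γ := Real.rpow_pos_of_pos (hσ0 hγ hσ) _
  have hinv : (σ ^ qq γ)⁻¹ * σ ^ qq γ = 1 := inv_mul_cancel₀ (ne_of_gt hqpos)
  nlinarith [mul_le_mul_of_nonneg_right hb hqpos.le]

lemma hABf :
    (aa γ * σ ^ (pp γ - 1) * (σ ^ qq γ - 1)) * (qq γ * σ ^ (qq γ - 1) * (1 - σ ^ pp γ))
      = kappa γ ^ 2 * ff γ σ := by
  rw [hkappa_sq hγ]
  have h2 := r2 hγ hσ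
  unfold ff
  linear_combination (aa γ * qq γ * (σ ^ qq γ - 1) * (1 - σ ^ pp γ)) * h2

lemma hA_le_B :
    aa γ * σ ^ (pp γ - 1) * (σ ^ qq γ - 1) ≤ qq γ * σ ^ (qq γ - 1) * (1 - σ ^ pp γ) := by
  have hL2 := L2 hγ hσ
  have hpm1 : (0:ℝ) < σ ^ (pp γ - 1) := Real.rpow_pos_of_pos (hσ0 hγ hσ) _
  have haapos := haa_pos (γ := γ) hγ
  have h1mp : (0:ℝ) < 1 - σ ^ pp γ := by have := hp_lt_one hγ hσ; linarith
  have hqqpos := hqq_pos (γ := γ) hγ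
  have hqq2 : 2 < qq γ := by
    have h1 := hpq_sum (γ := γ) hγ; have h2 := hpp_neg (γ := γ) hγ; linarith
  have hσle : σ ≤ σ ^ (qq γ - 1) := by
    have := Real.rpow_le_rpow_of_exponent_le hσ.le (by linarith : (1:ℝ) ≤ qq γ - 1)
    rwa [Real.rpow_one] at this
  calc aa γ * σ ^ (pp γ - 1) * (σ ^ qq γ - 1)
      ≤ aa γ * σ ^ (pp γ - 1) * (γ * σ ^ qq γ * (1 - σ ^ pp γ)) := by
        apply mul_le_mul_of_nonneg_left hL2 (by positivity)
    _ = (aa γ * γ) * (σ ^ qq γ * σ ^ (pp γ - 1)) * (1 - σ ^ pp γ) := by ring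
    _ = qq γ * σ * (1 - σ ^ pp γ) := by rw [r3 hγ hσ, ← haq]
    _ ≤ qq γ * σ ^ (qq γ - 1) * (1 - σ ^ pp γ) := by
        apply mul_le_mul_of_nonneg_right (mul_le_mul_of_nonneg_left hσle hqqpos.le) h1mp.le

lemma hB_le :
    qq γ * σ ^ (qq γ - 1) * (1 - σ ^ pp γ) ≤ σ ^ qq γ * (aa γ * σ ^ (pp γ - 1) * (σ ^ qq γ - 1)) := by
  have hr1 := r1 hγ hσ
  have hr3 := r3 hγ hσ
  have hr3' := r3' hγ hσ
  have hL1 := L1 hγ hσ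
  have haapos := haa_pos (γ := γ) hγ
  have hσpos := hσ0 hγ hσ
  have hBeq : qq γ * σ ^ (qq γ - 1) * (1 - σ ^ pp γ) = aa γ * σ * (γ * (σ ^ aa γ - 1)) := by
    have h1mp : 1 - σ ^ pp γ = σ ^ pp γ * (σ ^ aa γ - 1) := by
      linear_combination -hr1
    have haqe : qq γ = aa γ * γ := haq
    linear_combination qq γ * σ ^ (qq γ - 1) * h1mp + qq γ * (σ ^ aa γ - 1) * hr3'
      + σ * (σ ^ aa γ - 1) * haqe
  have hAeq : σ ^ qq γ * (aa γ * σ ^ (pp γ - 1) * (σ ^ qq γ - 1)) = aa γ * σ * (σ ^ qq γ - 1) := by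
    linear_combination aa γ * (σ ^ qq γ - 1) * hr3
  rw [hBeq, hAeq]
  apply mul_le_mul_of_nonneg_left hL1 (by positivity)






lemma hA_pos : 0 < aa γ * σ ^ (pp γ - 1) * (σ ^ qq γ - 1) := by
  have h1 := haa_pos (γ := γ) hγ
  have h2 : (0:ℝ) < σ ^ (pp γ - 1) := Real.rpow_pos_of_pos (hσ0 hγ hσ) _
  have h3 := hq_gt_one hγ hσ
  have : (0:ℝ) < σ ^ qq γ - 1 := by linarith
  positivity

lemma hB_pos : 0 < qq γ * σ ^ (qq γ - 1) * (1 - σ ^ pp γ) := by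
  have h1 := hqq_pos (γ := γ) hγ
  have h2 : (0:ℝ) < σ ^ (qq γ - 1) := Real.rpow_pos_of_pos (hσ0 hγ hσ) _
  have h3 := hp_lt_one hγ hσ
  have : (0:ℝ) < 1 - σ ^ pp γ := by linarith
  positivity

lemma hDD_ge : kappa γ ≤ DD γ σ := by
  set A := aa γ * σ ^ (pp γ - 1) * (σ ^ qq γ - 1) with hA
  set B := qq γ * σ ^ (qq γ - 1) * (1 - σ ^ pp γ) with hB
  have hApos := hA_pos hγ hσ
  have hBpos := hB_pos hγ hσ
  have hfpos := hff_pos hγ hσ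
  have hsf : (0:ℝ) < Real.sqrt (ff γ σ) := Real.sqrt_pos.2 hfpos
  have hamgm : 2 * Real.sqrt (A * B) ≤ A + B := by
    have h1 := two_mul_le_add_sq (Real.sqrt A) (Real.sqrt B)
    rw [Real.sq_sqrt hApos.le, Real.sq_sqrt hBpos.le] at h1
    rw [Real.sqrt_mul hApos.le]
    linarith
  have hsab : Real.sqrt (A * B) = kappa γ * Real.sqrt (ff γ σ) := by
    rw [hABf hγ hσ, Real.sqrt_mul (sq_nonneg _), Real.sqrt_sq (hkappa_pos hγ).le]
  rw [hsab] at hamgm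
  unfold DD
  rw [le_div_iff₀ (by positivity)]
  linarith

lemma hDD_pos : 0 < DD γ σ := lt_of_lt_of_le (hkappa_pos hγ) (hDD_ge hγ hσ)

lemma hDD_le (hσx : σ ≤ x) : DD γ σ ≤ kappa γ * Real.sqrt (x ^ qq γ) := by
  set A := aa γ * σ ^ (pp γ - 1) * (σ ^ qq γ - 1) with hA
  set B := qq γ * σ ^ (qq γ - 1) * (1 - σ ^ pp γ) with hB
  have hApos := hA_pos hγ hσ
  have hBpos := hB_pos hγ hσ
  have hfpos := hff_pos hγ hσ
  have hsf : (0:ℝ) < Real.sqrt (ff γ σ) := Real.sqrt_pos.2 hfpos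
  have hAB := hA_le_B hγ hσ
  have hqx : σ ^ qq γ ≤ x ^ qq γ :=
    Real.rpow_le_rpow (hσ0 hγ hσ).le hσx (hqq_pos hγ).le
  have hBsq : B ≤ kappa γ * Real.sqrt (x ^ qq γ) * Real.sqrt (ff γ σ) := by
    have h1 : B * B ≤ (x ^ qq γ) * (A * B) := by
      have h2 : B ≤ x ^ qq γ * A :=
        le_trans (hB_le hγ hσ) (mul_le_mul_of_nonneg_right hqx hApos.le)
      nlinarith
    have h3 : B = Real.sqrt (B * B) := (Real.sqrt_mul_self hBpos.le).symm
    rw [h3]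
    calc Real.sqrt (B * B) ≤ Real.sqrt ((x ^ qq γ) * (A * B)) := Real.sqrt_le_sqrt h1
      _ = kappa γ * Real.sqrt (x ^ qq γ) * Real.sqrt (ff γ σ) := by
          have hx0 : (0:ℝ) ≤ x ^ qq γ := Real.rpow_nonneg (by linarith) _
          rw [hABf hγ hσ, Real.sqrt_mul hx0, Real.sqrt_mul (sq_nonneg _),
            Real.sqrt_sq (hkappa_pos hγ).le]
          ring
  unfold DD
  rw [div_le_iff₀ (by positivity)]
  nlinarith




end sigma

lemma phiB_one : phiB γ 1 = 0 := by simp [phiB]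

lemma ffeq (hσ1 : 1 ≤ σ) : phiB γ σ = Real.sqrt (ff γ σ) := by
  rcases eq_or_lt_of_le hσ1 with h | h
  · rw [← h, phiB_one]
    have : (1:ℝ) ^ pp γ = 1 := Real.one_rpow _
    unfold ff
    rw [this]
    simp
  · have : ¬ (σ ≤ 1) := not_le.2 h
    simp only [phiB, this, if_false, shockPart, ff, pp, qq]

lemma contOn_ff : ContinuousOn (ff γ) (Ici 1) := by
  have h1 : ContinuousOn (fun y : ℝ => y ^ pp γ) (Ici 1) := fun y hy =>
    (Real.continuousAt_rpow_const y _ (Or.inl (by simp at hy; positivity))).continuousWithinAt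
  have h2 : ContinuousOn (fun y : ℝ => y ^ qq γ) (Ici 1) := fun y hy =>
    (Real.continuousAt_rpow_const y _ (Or.inl (by simp at hy; positivity))).continuousWithinAt
  exact ((continuousOn_const.sub h1).mul (h2.sub continuousOn_const))

lemma contOn_phiB : ContinuousOn (phiB γ) (Ici 1) := by
  apply ContinuousOn.congr (Real.continuous_sqrt.comp_continuousOn contOn_ff)
  intro y hy
  exact ffeq hy

lemma contOn_DD (hγ : 1 < γ) : ContinuousOn (DD γ) (Ioi 1) := by
  have hrp : ∀ c : ℝ, ContinuousOn (fun y : ℝ => y ^ c) (Ioi (1:ℝ)) := fun c y hy =>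
    (Real.continuousAt_rpow_const y _ (Or.inl (by simp at hy; positivity))).continuousWithinAt
  have hnum : ContinuousOn (fun σ => aa γ * σ ^ (pp γ - 1) * (σ ^ qq γ - 1)
      + qq γ * σ ^ (qq γ - 1) * (1 - σ ^ pp γ)) (Ioi (1:ℝ)) :=
    ((continuousOn_const.mul (hrp _)).mul ((hrp _).sub continuousOn_const)).add
      ((continuousOn_const.mul (hrp _)).mul (continuousOn_const.sub (hrp _)))
  have hffc : ContinuousOn (ff γ) (Ioi 1) :=
    contOn_ff.mono (Ioi_subset_Ici le_rfl)
  apply hnum.div ((continuousOn_const.mul (Real.continuous_sqrt.comp_continuousOn hffc)))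
  intro y hy
  have := hff_pos hγ (mem_Ioi.mp hy)
  have : (0:ℝ) < Real.sqrt (ff γ y) := Real.sqrt_pos.2 this
  simp only [Pi.mul_apply, Function.comp_apply]
  positivity

end Case1Aux

open Case1Aux

/-- the key inequality in Case 1 of the non-existence proof: the
    change of φ(r,s) = θ(s) - ψ(r) across a suitably strong incoming backward shock
    is strictly negative, i.e. the integral below is strictly positive. -/
theorem case1_key_inequality (γ : ℝ) (hγ : 1 < γ)
    (θ ψ : ℝ → ℝ) (hθ : ContDiff ℝ 1 θ) (hψ : ContDiff ℝ 1 ψ)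
    (a c : ℝ) (M δ : ℝ) (hδ : 0 < δ) (hMδ : δ < M)
    (hθ' : ∀ s ∈ Set.Ioo a c, M < deriv θ s)
    (hψ' : ∀ r ∈ Set.Ioo a c, deriv ψ r + δ < M)
    (x : ℝ) (hx : 1 < x)
    (hxstrong : kappa γ * (2 * M / δ - 1) * (x - 1) < phiB γ x)
    (ubar ξbar : ℝ) (hξbar : 0 < ξbar)
    (hmem : ∀ σ ∈ Set.Icc (1 : ℝ) x,
      ubar - phiB γ σ * ξbar + kappa γ * σ * ξbar ∈ Set.Ioo a c ∧
      ubar - phiB γ σ * ξbar - kappa γ * σ * ξbar ∈ Set.Ioo a c) :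
    0 < ∫ σ in (1 : ℝ)..x,
      (deriv θ (ubar - phiB γ σ * ξbar + kappa γ * σ * ξbar)
          * (deriv (phiB γ) σ - kappa γ)
        - deriv ψ (ubar - phiB γ σ * ξbar - kappa γ * σ * ξbar)
          * (deriv (phiB γ) σ + kappa γ)) := by
  have hκ := hkappa_pos hγ
  set ss : ℝ → ℝ := fun σ => ubar - phiB γ σ * ξbar + kappa γ * σ * ξbar with hss
  set rr : ℝ → ℝ := fun σ => ubar - phiB γ σ * ξbar - kappa γ * σ * ξbar with hrr
  set mine : ℝ → ℝ := fun σ =>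
    deriv θ (ss σ) * (DD γ σ - kappa γ) - deriv ψ (rr σ) * (DD γ σ + kappa γ) with hmine
  -- continuity facts
  have hIcc_sub : Set.Icc (1:ℝ) x ⊆ Set.Ici 1 := fun y hy => hy.1
  have hphic : ContinuousOn (phiB γ) (Set.Icc 1 x) := contOn_phiB.mono hIcc_sub
  have hssc : ContinuousOn ss (Set.Icc 1 x) :=
    (continuousOn_const.sub (hphic.mul continuousOn_const)).add
      ((continuousOn_const.mul continuousOn_id).mul continuousOn_const)
  have hrrc : ContinuousOn rr (Set.Icc 1 x) :=
    (continuousOn_const.sub (hphic.mul continuousOn_const)).sub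
      ((continuousOn_const.mul continuousOn_id).mul continuousOn_const)
  have hθ'c : Continuous (deriv θ) := hθ.continuous_deriv le_rfl
  have hψ'c : Continuous (deriv ψ) := hψ.continuous_deriv le_rfl
  -- derivative facts
  have hsder : ∀ σ, 1 < σ → HasDerivAt ss ((kappa γ - DD γ σ) * ξbar) σ := by
    intro σ hσ1
    have hd := hasDerivAt_phiB hγ hσ1
    have h1 : HasDerivAt (fun y => ubar - phiB γ y * ξbar) (0 - DD γ σ * ξbar) σ :=
      (hasDerivAt_const σ ubar).sub (hd.mul_const ξbar)
    have h2 : HasDerivAt (fun y : ℝ => kappa γ * y * ξbar) (kappa γ * 1 * ξbar) σ :=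
      ((hasDerivAt_id σ).const_mul (kappa γ)).mul_const ξbar
    have h3 := h1.add h2
    convert h3 using 1 <;> try rfl
    ring
  have hrder : ∀ σ, 1 < σ → HasDerivAt rr ((-(DD γ σ) - kappa γ) * ξbar) σ := by
    intro σ hσ1
    have hd := hasDerivAt_phiB hγ hσ1
    have h1 : HasDerivAt (fun y => ubar - phiB γ y * ξbar) (0 - DD γ σ * ξbar) σ :=
      (hasDerivAt_const σ ubar).sub (hd.mul_const ξbar)
    have h2 : HasDerivAt (fun y : ℝ => kappa γ * y * ξbar) (kappa γ * 1 * ξbar) σ :=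
      ((hasDerivAt_id σ).const_mul (kappa γ)).mul_const ξbar
    have h3 := h1.sub h2
    convert h3 using 1 <;> try rfl
    ring
  set Φ : ℝ → ℝ := fun σ => ψ (rr σ) - θ (ss σ) with hΦ
  have hΦder : ∀ σ, 1 < σ → HasDerivAt Φ (ξbar * mine σ) σ := by
    intro σ hσ1
    have hψd : HasDerivAt ψ (deriv ψ (rr σ)) (rr σ) :=
      ((hψ.differentiable one_ne_zero) (rr σ)).hasDerivAt
    have hθd : HasDerivAt θ (deriv θ (ss σ)) (ss σ) :=
      ((hθ.differentiable one_ne_zero) (ss σ)).hasDerivAt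
    have h1 := (hψd.comp σ (hrder σ hσ1)).sub (hθd.comp σ (hsder σ hσ1))
    convert h1 using 1 <;> try rfl
    simp only [hmine]
    ring
  have hΦc : ContinuousOn Φ (Set.Icc 1 x) :=
    ((hψ.continuous.comp_continuousOn hrrc)).sub ((hθ.continuous.comp_continuousOn hssc))
  -- integrability of mine
  have hmineInt : IntervalIntegrable mine MeasureTheory.volume 1 x := by
    rw [intervalIntegrable_iff_integrableOn_Ioc_of_le hx.le]
    obtain ⟨C1, hC1⟩ := (isCompact_Icc (a := (1:ℝ)) (b := x)).exists_bound_of_continuousOn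
      (hθ'c.comp_continuousOn hssc)
    obtain ⟨C2, hC2⟩ := (isCompact_Icc (a := (1:ℝ)) (b := x)).exists_bound_of_continuousOn
      (hψ'c.comp_continuousOn hrrc)
    have hC1n : 0 ≤ C1 := le_trans (norm_nonneg _) (hC1 1 ⟨le_refl 1, hx.le⟩)
    have hC2n : 0 ≤ C2 := le_trans (norm_nonneg _) (hC2 1 ⟨le_refl 1, hx.le⟩)
    set Db := kappa γ * Real.sqrt (x ^ qq γ) with hDb
    have hminec : ContinuousOn mine (Set.Ioc 1 x) := by
      have h1 : Set.Ioc (1:ℝ) x ⊆ Set.Ioi 1 := fun y hy => hy.1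
      have h2 : Set.Ioc (1:ℝ) x ⊆ Set.Icc 1 x := fun y hy => ⟨hy.1.le, hy.2⟩
      exact ((hθ'c.comp_continuousOn (hssc.mono h2)).mul
          (((contOn_DD hγ).mono h1).sub continuousOn_const)).sub
        ((hψ'c.comp_continuousOn (hrrc.mono h2)).mul
          (((contOn_DD hγ).mono h1).add continuousOn_const))
    apply MeasureTheory.Integrable.mono'
      (g := fun _ => C1 * (Db + kappa γ) + C2 * (Db + kappa γ))
      (MeasureTheory.integrable_const _)
      (hminec.aestronglyMeasurable measurableSet_Ioc)
    rw [MeasureTheory.ae_restrict_iff' measurableSet_Ioc]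
    apply Filter.Eventually.of_forall
    intro σ hσ
    have hσ1 : 1 < σ := hσ.1
    have hσIcc : σ ∈ Set.Icc (1:ℝ) x := ⟨hσ1.le, hσ.2⟩
    have hDge := hDD_ge hγ hσ1
    have hDle := hDD_le hγ hσ1 hσ.2
    have e1 : |DD γ σ - kappa γ| ≤ Db + kappa γ := by
      rw [abs_of_nonneg (by linarith)]; linarith
    have e2 : |DD γ σ + kappa γ| ≤ Db + kappa γ := by
      rw [abs_of_nonneg (by linarith)]; linarith
    calc ‖mine σ‖ ≤ ‖deriv θ (ss σ) * (DD γ σ - kappa γ)‖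
          + ‖deriv ψ (rr σ) * (DD γ σ + kappa γ)‖ := norm_sub_le _ _
      _ ≤ C1 * (Db + kappa γ) + C2 * (Db + kappa γ) := by
          rw [norm_mul, norm_mul]
          gcongr
          · exact hC1 σ hσIcc
          · exact e1
          · exact hC2 σ hσIcc
          · exact e2
  -- FTC
  have hFTC : ∫ σ in (1:ℝ)..x, ξbar * mine σ = Φ x - Φ 1 :=
    intervalIntegral.integral_eq_sub_of_hasDerivAt_of_le hx.le hΦc
      (fun σ hσ => hΦder σ hσ.1) (hmineInt.const_mul ξbar)
  rw [intervalIntegral.integral_const_mul] at hFTC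
  -- monotonicity comparison
  set K : ℝ → ℝ := fun σ => Φ σ - ξbar * (δ * phiB γ σ - (2*M - δ) * kappa γ * σ) with hK
  have hKder : ∀ σ, 1 < σ → HasDerivAt K (ξbar * mine σ
      - ξbar * (δ * DD γ σ - (2*M - δ) * kappa γ * 1)) σ := by
    intro σ hσ1
    exact (hΦder σ hσ1).sub (((((hasDerivAt_phiB hγ hσ1).const_mul δ).sub
      (((hasDerivAt_id σ).const_mul ((2*M - δ) * kappa γ)))).const_mul ξbar))
  have hKmono : MonotoneOn K (Set.Icc 1 x) := by
    apply monotoneOn_of_deriv_nonneg (convex_Icc 1 x)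
    · exact hΦc.sub (continuousOn_const.mul ((continuousOn_const.mul hphic).sub
        ((continuousOn_const.mul continuousOn_id))))
    · intro σ hσ
      rw [interior_Icc] at hσ
      exact (hKder σ hσ.1).differentiableAt.differentiableWithinAt
    · intro σ hσ
      rw [interior_Icc] at hσ
      rw [(hKder σ hσ.1).deriv]
      have hσIcc : σ ∈ Set.Icc (1:ℝ) x := ⟨hσ.1.le, hσ.2.le⟩
      obtain ⟨hsmem, hrmem⟩ := hmem σ hσIcc
      have hθs := hθ' _ hsmem
      have hψr := hψ' _ hrmem
      have hDge := hDD_ge hγ hσ.1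
      have key : mine σ - (δ * DD γ σ - (2*M - δ) * kappa γ * 1)
          = (deriv θ (ss σ) - M) * (DD γ σ - kappa γ)
            + (M - δ - deriv ψ (rr σ)) * (DD γ σ + kappa γ) := by
        simp only [hmine]; ring
      have h1 : 0 ≤ (deriv θ (ss σ) - M) * (DD γ σ - kappa γ) :=
        mul_nonneg (by linarith) (by linarith)
      have h2 : 0 ≤ (M - δ - deriv ψ (rr σ)) * (DD γ σ + kappa γ) :=
        mul_nonneg (by linarith) (by linarith)
      have h3 : 0 ≤ mine σ - (δ * DD γ σ - (2*M - δ) * kappa γ * 1) := by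
        rw [key]; linarith
      nlinarith [hξbar]
  have hK1x := hKmono (Set.left_mem_Icc.2 hx.le) (Set.right_mem_Icc.2 hx.le) hx.le
  -- conclude
  have hGpos : 0 < δ * phiB γ x - (2*M - δ) * kappa γ * (x - 1) := by
    have h := mul_lt_mul_of_pos_left hxstrong hδ
    have hdd : δ * (2 * M / δ) = 2 * M := mul_div_cancel₀ _ (ne_of_gt hδ)
    have he : δ * (kappa γ * (2 * M / δ - 1) * (x - 1)) = (2*M - δ) * kappa γ * (x - 1) := by
      linear_combination kappa γ * (x - 1) * hdd
    rw [he] at h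
    linarith
  have hΦdiff : ξbar * (δ * phiB γ x - (2*M - δ) * kappa γ * (x - 1)) ≤ Φ x - Φ 1 := by
    have hKx : K 1 ≤ K x := hK1x
    simp only [hK, phiB_one] at hKx
    nlinarith [hKx]
  have hminepos : 0 < ∫ σ in (1:ℝ)..x, mine σ := by
    have h1 : 0 < ξbar * ∫ σ in (1:ℝ)..x, mine σ := by
      rw [hFTC]
      calc (0:ℝ) < ξbar * (δ * phiB γ x - (2*M - δ) * kappa γ * (x - 1)) := by positivity
        _ ≤ Φ x - Φ 1 := hΦdiff
    by_contra hI
    push_neg at hI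
    nlinarith [mul_nonpos_of_nonneg_of_nonpos hξbar.le hI]
  -- rewrite goal integral to mine
  have hcongr : (∫ σ in (1:ℝ)..x,
      (deriv θ (ubar - phiB γ σ * ξbar + kappa γ * σ * ξbar)
          * (deriv (phiB γ) σ - kappa γ)
        - deriv ψ (ubar - phiB γ σ * ξbar - kappa γ * σ * ξbar)
          * (deriv (phiB γ) σ + kappa γ))) = ∫ σ in (1:ℝ)..x, mine σ := by
    apply intervalIntegral.integral_congr_ae
    apply Filter.Eventually.of_forall
    intro σ hσ
    rw [Set.uIoc_of_le hx.le] at hσ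
    have hd := (hasDerivAt_phiB hγ hσ.1).deriv
    simp only [hmine, hss, hrr, hd]
  rw [hcongr]
  exact hminepos
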